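/- The element r_b ∈ F_4 does not belong to the subgroup W̄_4 · γ_5 F_4; indeed, in the truncated algebra A_4 over ℤ/2ℤ on X_1, …, X_4, the degree-3 component of E^2(r_b) has coefficient 1 on the monomial X_4X_2X_3. -/

import Mathlib

/-- `W_n`, the set of `n`-th powers in a group `G`. -/
def powSet (G : Type*) [Group G] (n : ℕ) : Set G := {x | ∃ w : G, x = w ^ n}

/-- `W̄_n`, the normal subgroup of the free group `F_m` generated by the set `W_n`
of `n`-th powers. -/
def Wbar (m n : ℕ) : Subgroup (FreeGroup (Fin m)) :=
  Subgroup.normalClosure (powSet (FreeGroup (Fin m)) n)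

instance (m n : ℕ) : (Wbar m n).Normal := Subgroup.normalClosure_normal

/-- `W̄_n · γ_q F_m`: since both factors are normal subgroups of `F_m`, this product
subgroup equals the join.  (Recall `lowerCentralSeries G 0 = G = γ₁ G`, so
`γ_q G = lowerCentralSeries G (q-1)`.) -/
def WbarGamma (m n q : ℕ) : Subgroup (FreeGroup (Fin m)) :=
  Wbar m n ⊔ (⊤ : Subgroup (FreeGroup (Fin m))).lowerCentralSeries (q - 1)

instance (m n q : ℕ) : (WbarGamma m n q).Normal := Subgroup.sup_normal _ _

/-- `F^q(m,n) = F_m / (W̄_n · γ_q F_m)`. -/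
def BurnsideQuot (m n q : ℕ) : Type := FreeGroup (Fin m) ⧸ WbarGamma m n q

noncomputable instance (m n q : ℕ) : Group (BurnsideQuot m n q) :=
  QuotientGroup.Quotient.group _

/-- The monomial `X_{w₁} ⋯ X_{w_l}` in the free associative `ZMod p`-algebra `T` on
noncommuting indeterminates `X_1, …, X_m`. -/
def magnusMonomial (p m : ℕ) (w : List (Fin m)) : FreeAlgebra (ZMod p) (Fin m) :=
  (w.map (FreeAlgebra.ι (ZMod p))).prod

/-- The relation generating (as a ring congruence) the two-sided ideal `I^k`, where
`I ⊆ T` is the two-sided ideal generated by `X_1, …, X_m`: every monomial of degree `k`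
is set to `0`. -/
def truncRel (p m k : ℕ) :
    FreeAlgebra (ZMod p) (Fin m) → FreeAlgebra (ZMod p) (Fin m) → Prop :=
  fun a b => ∃ w : List (Fin m), w.length = k ∧ a = magnusMonomial p m w ∧ b = 0

/-- The truncated algebra `A_k = T/I^k`. -/
abbrev TruncAlgebra (p m k : ℕ) := RingQuot (truncRel p m k)

/-- The quotient map `T → A_k`. -/
def truncMk (p m k : ℕ) :
    FreeAlgebra (ZMod p) (Fin m) →+* TruncAlgebra p m k :=
  RingQuot.mkRingHom _

lemma isUnit_one_add_X (p m k : ℕ) (i : Fin m) :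
    IsUnit (1 + truncMk p m k (FreeAlgebra.ι (ZMod p) i)) := by
  refine IsNilpotent.isUnit_one_add ⟨k, ?_⟩
  rw [← map_pow]
  have h1 : (FreeAlgebra.ι (ZMod p) i) ^ k = magnusMonomial p m (List.replicate k i) := by
    simp [magnusMonomial, List.map_replicate, List.prod_replicate]
  have h2 : truncMk p m k (magnusMonomial p m (List.replicate k i)) = truncMk p m k 0 :=
    RingQuot.mkRingHom_rel ⟨List.replicate k i, List.length_replicate, rfl, rfl⟩
  rw [h1, h2, map_zero]

/-- The Magnus `ZMod p`-expansion truncated at degree `k`: the unique group homomorphism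
`E^p : F_m → A_kˣ` with `E^p(x_i) = 1 + X_i`. -/
noncomputable def magnus (p m k : ℕ) :
    FreeGroup (Fin m) →* (TruncAlgebra p m k)ˣ :=
  FreeGroup.lift fun i => (isUnit_one_add_X p m k i).unit

/-- The coefficient of the monomial `X_{w₁} ⋯ X_{w_l}` in an element of the free
algebra `T`, via the canonical basis of `T` given by words in `X_1, …, X_m`. -/
noncomputable def magnusCoeff (p m : ℕ) (w : List (Fin m))
    (t : FreeAlgebra (ZMod p) (Fin m)) : ZMod p :=
  (FreeAlgebra.equivMonoidAlgebraFreeMonoid (R := ZMod p) (X := Fin m) t).coeff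
    (FreeMonoid.ofList w)

/-- The generators `x_1, …, x_4` of the free group `F_4` (`xF4 i` is `x_{i+1}`). -/
def xF4 (i : Fin 4) : FreeGroup (Fin 4) := FreeGroup.of i

/-- `Q_3 = x_4x_1⁻¹x_2x_4⁻¹x_1x_2⁻¹ · x_3 · x_2⁻¹x_1x_4⁻¹x_2x_1⁻¹x_4 ∈ F_4`. -/
def QWelded : FreeGroup (Fin 4) :=
  xF4 3 * (xF4 0)⁻¹ * xF4 1 * (xF4 3)⁻¹ * xF4 0 * (xF4 1)⁻¹ *
  xF4 2 *
  (xF4 1)⁻¹ * xF4 0 * (xF4 3)⁻¹ * xF4 1 * (xF4 0)⁻¹ * xF4 3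

/-- `r_b = Q_3 x_3⁻¹ ∈ F_4`, the relator of the associated core group of the closure
of the welded 4-braid `b`. -/
def rWelded : FreeGroup (Fin 4) := QWelded * (xF4 2)⁻¹


abbrev Vsp : Type := List (Fin 4) → ZMod 2

def Pfun (i : Fin 4) (v : Vsp) : Vsp
  | [] => 0
  | j :: t => if j = i ∧ t.length < 3 then v t else 0

def Pop (i : Fin 4) : Module.End (ZMod 2) Vsp where
  toFun := Pfun i
  map_add' v v' := by
    funext w
    cases w with
    | nil => simp [Pfun]
    | cons j t => simp only [Pfun, Pi.add_apply]; split_ifs <;> simp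
  map_smul' c v := by
    funext w
    cases w with
    | nil => simp [Pfun]
    | cons j t => simp only [Pfun, RingHom.id_apply, Pi.smul_apply]; split_ifs <;> simp

@[simp] lemma Pop_apply (i : Fin 4) (v : Vsp) (w : List (Fin 4)) :
    Pop i v w = Pfun i v w := rfl

/-- Lower-truncation: output vanishes in degrees > 3. -/
def LowerT (f : Module.End (ZMod 2) Vsp) : Prop :=
  ∀ (v : Vsp) (w : List (Fin 4)), 3 < w.length → f v w = 0

/-- `f` raises degree by at least `d`. -/
def RaiseT (d : ℕ) (f : Module.End (ZMod 2) Vsp) : Prop :=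
  ∀ (k : ℕ) (v : Vsp), (∀ w : List (Fin 4), w.length < k → v w = 0) →
    ∀ w : List (Fin 4), w.length < k + d → f v w = 0

def Sset (d : ℕ) : Set (Module.End (ZMod 2) Vsp) := {f | RaiseT d f ∧ LowerT f}

lemma Sset_zero (d : ℕ) : (0 : Module.End (ZMod 2) Vsp) ∈ Sset d :=
  ⟨fun _ _ _ _ _ => rfl, fun _ _ _ => rfl⟩

lemma Sset_add {d : ℕ} {f g : Module.End (ZMod 2) Vsp} (hf : f ∈ Sset d) (hg : g ∈ Sset d) :
    f + g ∈ Sset d := by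
  refine ⟨fun k v hv w hw => ?_, fun v w hw => ?_⟩
  · simp [LinearMap.add_apply, hf.1 k v hv w hw, hg.1 k v hv w hw]
  · simp [LinearMap.add_apply, hf.2 v w hw, hg.2 v w hw]

lemma Sset_neg {d : ℕ} {f : Module.End (ZMod 2) Vsp} (hf : f ∈ Sset d) : -f ∈ Sset d := by
  refine ⟨fun k v hv w hw => ?_, fun v w hw => ?_⟩
  · simp [LinearMap.neg_apply, hf.1 k v hv w hw]
  · simp [LinearMap.neg_apply, hf.2 v w hw]

lemma Sset_sub {d : ℕ} {f g : Module.End (ZMod 2) Vsp} (hf : f ∈ Sset d) (hg : g ∈ Sset d) :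
    f - g ∈ Sset d := by
  rw [sub_eq_add_neg]; exact Sset_add hf (Sset_neg hg)

lemma Sset_mul {a b : ℕ} {f g : Module.End (ZMod 2) Vsp} (hf : f ∈ Sset a) (hg : g ∈ Sset b) :
    f * g ∈ Sset (a + b) := by
  refine ⟨fun k v hv w hw => ?_, fun v w hw => ?_⟩
  · have h1 : ∀ w : List (Fin 4), w.length < k + b → (g v) w = 0 := hg.1 k v hv
    have := hf.1 (k + b) (g v) h1 w (by omega)
    simpa [Module.End.mul_apply] using this
  · simpa [Module.End.mul_apply] using hf.2 (g v) w hw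

lemma Sset_anti {a b : ℕ} (h : a ≤ b) {f : Module.End (ZMod 2) Vsp} (hf : f ∈ Sset b) :
    f ∈ Sset a :=
  ⟨fun k v hv w hw => hf.1 k v hv w (by omega), hf.2⟩

lemma Sset_four {f : Module.End (ZMod 2) Vsp} (hf : f ∈ Sset 4) : f = 0 := by
  ext v w
  rcases le_or_gt w.length 3 with h | h
  · exact hf.1 0 v (fun w hw => absurd hw (Nat.not_lt_zero _)) w (by omega)
  · exact hf.2 v w h

lemma Pop_mem_S (i : Fin 4) : Pop i ∈ Sset 1 := by
  refine ⟨fun k v hv w hw => ?_, fun v w hw => ?_⟩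
  · cases w with
    | nil => rfl
    | cons j t =>
      simp only [Pop_apply, Pfun]
      split_ifs with h
      · exact hv t (by simp only [List.length_cons] at hw; omega)
      · rfl
  · cases w with
    | nil => rfl
    | cons j t =>
      simp only [Pop_apply, Pfun]
      split_ifs with h
      · simp only [List.length_cons] at hw; omega
      · rfl

noncomputable def psiA : FreeAlgebra (ZMod 2) (Fin 4) →ₐ[ZMod 2] Module.End (ZMod 2) Vsp :=
  FreeAlgebra.lift (ZMod 2) Pop

def prodP (u : List (Fin 4)) : Module.End (ZMod 2) Vsp := (u.map Pop).prod

lemma psiA_monomial (u : List (Fin 4)) : psiA (magnusMonomial 2 4 u) = prodP u := by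
  rw [magnusMonomial, map_list_prod, List.map_map, prodP]
  congr 1
  ext i
  simp [psiA, FreeAlgebra.lift_ι_apply]

lemma prodP_short (u : List (Fin 4)) (v : Vsp) (w : List (Fin 4)) (h : w.length < u.length) :
    prodP u v w = 0 := by
  induction u generalizing w with
  | nil => simp at h
  | cons i u' ih =>
    rw [prodP, List.map_cons, List.prod_cons, Module.End.mul_apply]
    cases w with
    | nil => rfl
    | cons j t =>
      show Pfun i _ (j :: t) = 0
      rw [Pfun]
      split_ifs with hc
      · exact ih t (by simp only [List.length_cons] at h ⊢; omega)
      · rfl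

lemma prodP_long (u : List (Fin 4)) (v : Vsp) (w : List (Fin 4)) (hu : u ≠ [])
    (h : 3 < w.length) : prodP u v w = 0 := by
  cases u with
  | nil => exact absurd rfl hu
  | cons i u' =>
    rw [prodP, List.map_cons, List.prod_cons, Module.End.mul_apply]
    cases w with
    | nil => rfl
    | cons j t =>
      show Pfun i _ (j :: t) = 0
      rw [Pfun]
      split_ifs with hc
      · exfalso; simp only [List.length_cons] at h; omega
      · rfl

lemma prodP_four (u : List (Fin 4)) (hu : u.length = 4) : prodP u = 0 := by
  ext v w
  rcases le_or_gt w.length 3 with h | h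
  · exact prodP_short u v w (by omega)
  · exact prodP_long u v w (by rintro rfl; simp at hu) h

lemma psiA_trunc {a b : FreeAlgebra (ZMod 2) (Fin 4)} (h : truncRel 2 4 4 a b) :
    psiA.toRingHom a = psiA.toRingHom b := by
  obtain ⟨w, hw, rfl, rfl⟩ := h
  simp only [AlgHom.toRingHom_eq_coe, RingHom.coe_coe, map_zero]
  rw [psiA_monomial, prodP_four w hw]

noncomputable def psiBar : TruncAlgebra 2 4 4 →+* Module.End (ZMod 2) Vsp :=
  RingQuot.lift ⟨psiA.toRingHom, fun _ _ h => psiA_trunc h⟩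

lemma psiBar_mk (t : FreeAlgebra (ZMod 2) (Fin 4)) : psiBar (truncMk 2 4 4 t) = psiA t :=
  RingQuot.lift_mkRingHom_apply _ _ t

/-- delta at the empty word -/
def deltaNil : Vsp := fun w => if w = [] then 1 else 0

lemma prodP_delta (u w : List (Fin 4)) :
    prodP u deltaNil w = if w = u ∧ u.length ≤ 3 then 1 else 0 := by
  induction u generalizing w with
  | nil =>
    show deltaNil w = _
    rw [deltaNil]
    by_cases h : w = [] <;> simp [h]
  | cons i u' ih =>
    rw [prodP, List.map_cons, List.prod_cons, Module.End.mul_apply]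
    cases w with
    | nil =>
      show (0 : ZMod 2) = _
      rw [if_neg]; rintro ⟨h, -⟩; exact List.cons_ne_nil i u' h.symm
    | cons j t =>
      show Pfun i _ (j :: t) = _
      rw [Pfun]
      have ht : (List.map Pop u').prod deltaNil t = if t = u' ∧ u'.length ≤ 3 then 1 else 0 := ih t
      split_ifs with hc hd hd
      · rw [ht, if_pos]
        obtain ⟨h1, h2⟩ := hd
        obtain ⟨rfl, rfl⟩ : j = i ∧ t = u' := by
          constructor <;> [injection h1; injection h1]
        simp only [List.length_cons] at h2
        exact ⟨rfl, by omega⟩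
      · rw [ht, if_neg]
        rintro ⟨rfl, h2⟩
        obtain ⟨rfl, hlen⟩ := hc
        exact hd ⟨rfl, by simp only [List.length_cons]; omega⟩
      · exfalso
        obtain ⟨h1, h2⟩ := hd
        obtain ⟨rfl, rfl⟩ : j = i ∧ t = u' := by
          constructor <;> [injection h1; injection h1]
        simp only [List.length_cons] at h2
        exact hc ⟨rfl, by omega⟩
      · rfl

lemma end_addself (x : Module.End (ZMod 2) Vsp) : x + x = 0 := by
  rw [← two_smul (ZMod 2) x, show (2 : ZMod 2) = 0 from rfl, zero_smul]

def Qinv (i : Fin 4) : Module.End (ZMod 2) Vsp :=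
  1 + Pop i + Pop i ^ 2 + Pop i ^ 3

lemma Pop_sq_mem (i : Fin 4) : Pop i ^ 2 ∈ Sset 2 := by
  rw [pow_two]; exact Sset_mul (Pop_mem_S i) (Pop_mem_S i)

lemma Pop_cube_mem (i : Fin 4) : Pop i ^ 3 ∈ Sset 3 := by
  rw [pow_succ]; exact Sset_mul (Pop_sq_mem i) (Pop_mem_S i)

lemma Pop_pow4 (i : Fin 4) : Pop i ^ 4 = 0 := by
  have h := prodP_four [i, i, i, i] rfl
  rw [prodP] at h
  simp only [List.map_cons, List.map_nil, List.prod_cons, List.prod_nil, mul_one] at h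
  have e : Pop i ^ 4 = Pop i ^ 2 * Pop i ^ 2 := by rw [← pow_add]
  rw [e, pow_two]
  simpa only [mul_assoc] using h

lemma mulQ (i : Fin 4) : (1 + Pop i) * Qinv i = 1 := by
  have h4 := Pop_pow4 i
  have : (1 + Pop i) * Qinv i =
      1 + (Pop i + Pop i) + (Pop i ^ 2 + Pop i ^ 2) + (Pop i ^ 3 + Pop i ^ 3) + Pop i ^ 4 := by
    rw [Qinv]; noncomm_ring
  rw [this, h4, end_addself, end_addself, end_addself, add_zero, add_zero, add_zero, add_zero]

lemma qMul (i : Fin 4) : Qinv i * (1 + Pop i) = 1 := by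
  have h4 := Pop_pow4 i
  have : Qinv i * (1 + Pop i) =
      1 + (Pop i + Pop i) + (Pop i ^ 2 + Pop i ^ 2) + (Pop i ^ 3 + Pop i ^ 3) + Pop i ^ 4 := by
    rw [Qinv]; noncomm_ring
  rw [this, h4, end_addself, end_addself, end_addself, add_zero, add_zero, add_zero, add_zero]

def Uop (i : Fin 4) : (Module.End (ZMod 2) Vsp)ˣ :=
  ⟨1 + Pop i, Qinv i, mulQ i, qMul i⟩

@[simp] lemma Uop_val (i : Fin 4) : (↑(Uop i) : Module.End (ZMod 2) Vsp) = 1 + Pop i := rfl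

@[simp] lemma Uop_inv_val (i : Fin 4) :
    (↑(Uop i)⁻¹ : Module.End (ZMod 2) Vsp) = Qinv i := rfl

noncomputable def chiG : FreeGroup (Fin 4) →* (Module.End (ZMod 2) Vsp)ˣ :=
  (Units.map psiBar.toMonoidHom).comp (magnus 2 4 4)

lemma chi_of (i : Fin 4) : chiG (FreeGroup.of i) = Uop i := by
  apply Units.ext
  have h1 : (↑(chiG (FreeGroup.of i)) : Module.End (ZMod 2) Vsp)
      = psiBar ↑(magnus 2 4 4 (FreeGroup.of i)) := rfl
  rw [Uop_val, h1, magnus, FreeGroup.lift_apply_of, IsUnit.unit_spec, RingHom.map_add,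
    RingHom.map_one, psiBar_mk]
  congr 1
  simp [psiA, FreeAlgebra.lift_ι_apply]

lemma Sset_mul_one_add {z x : Module.End (ZMod 2) Vsp} {d e : ℕ}
    (hz : z ∈ Sset d) (hx : x - 1 ∈ Sset e) : z * x ∈ Sset d := by
  have h : z * x = z + z * (x - 1) := by rw [mul_sub, mul_one]; abel
  rw [h]
  exact Sset_add hz (Sset_anti (Nat.le_add_right d e) (Sset_mul hz hx))

lemma mul_sub_one_mem {u v : (Module.End (ZMod 2) Vsp)ˣ} {d : ℕ}
    (hu : (↑u : Module.End (ZMod 2) Vsp) - 1 ∈ Sset d)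
    (hv : (↑v : Module.End (ZMod 2) Vsp) - 1 ∈ Sset d) :
    (↑(u * v) : Module.End (ZMod 2) Vsp) - 1 ∈ Sset d := by
  have h : (↑(u * v) : Module.End (ZMod 2) Vsp) - 1 =
      ((↑u : Module.End (ZMod 2) Vsp) - 1) + ((↑v : Module.End (ZMod 2) Vsp) - 1) +
        ((↑u : Module.End (ZMod 2) Vsp) - 1) * ((↑v : Module.End (ZMod 2) Vsp) - 1) := by
    rw [Units.val_mul]; simp only [sub_mul, mul_sub, one_mul, mul_one]; abel
  rw [h]
  exact Sset_add (Sset_add hu hv) (Sset_anti (Nat.le_add_right d d) (Sset_mul hu hv))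

/-- Subgroup of `F₄` whose image under `chiG` is `1 + Sset d` (with inverse too). -/
def Kgrp (d : ℕ) : Subgroup (FreeGroup (Fin 4)) where
  carrier := {g | (↑(chiG g) : Module.End (ZMod 2) Vsp) - 1 ∈ Sset d ∧
      (↑(chiG g)⁻¹ : Module.End (ZMod 2) Vsp) - 1 ∈ Sset d}
  one_mem' := by
    constructor <;>
      simp only [map_one, inv_one, Units.val_one, sub_self] <;> exact Sset_zero d
  mul_mem' := by
    rintro a b ⟨ha1, ha2⟩ ⟨hb1, hb2⟩
    refine ⟨?_, ?_⟩
    · rw [map_mul]; exact mul_sub_one_mem ha1 hb1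
    · rw [map_mul, mul_inv_rev]; exact mul_sub_one_mem hb2 ha2
  inv_mem' := by
    rintro a ⟨ha1, ha2⟩
    refine ⟨?_, ?_⟩
    · rw [map_inv]; exact ha2
    · rw [map_inv, inv_inv]; exact ha1

lemma mem_Kgrp_one (g : FreeGroup (Fin 4)) : g ∈ Kgrp 1 := by
  have htop : (⊤ : Subgroup (FreeGroup (Fin 4))) ≤ Kgrp 1 := by
    rw [← FreeGroup.closure_range_of (Fin 4)]
    apply (Subgroup.closure_le _).mpr
    rintro x ⟨i, rfl⟩
    refine ⟨?_, ?_⟩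
    · rw [chi_of, Uop_val]
      have : (1 : Module.End (ZMod 2) Vsp) + Pop i - 1 = Pop i := by noncomm_ring
      rw [this]; exact Pop_mem_S i
    · rw [chi_of, Uop_inv_val]
      have : Qinv i - 1 = Pop i + Pop i ^ 2 + Pop i ^ 3 := by rw [Qinv]; noncomm_ring
      rw [this]
      exact Sset_add (Sset_add (Pop_mem_S i) (Sset_anti (by omega) (Pop_sq_mem i)))
        (Sset_anti (by omega) (Pop_cube_mem i))
  exact htop (Subgroup.mem_top g)

lemma comm_mem {u v : (Module.End (ZMod 2) Vsp)ˣ} {d e : ℕ}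
    (hu : (↑u : Module.End (ZMod 2) Vsp) - 1 ∈ Sset d)
    (hui : (↑u⁻¹ : Module.End (ZMod 2) Vsp) - 1 ∈ Sset d)
    (hv : (↑v : Module.End (ZMod 2) Vsp) - 1 ∈ Sset e)
    (hvi : (↑v⁻¹ : Module.End (ZMod 2) Vsp) - 1 ∈ Sset e) :
    (↑(u * v * u⁻¹ * v⁻¹) : Module.End (ZMod 2) Vsp) - 1 ∈ Sset (d + e) := by
  set a := (↑u : Module.End (ZMod 2) Vsp)
  set b := (↑v : Module.End (ZMod 2) Vsp)
  set a' := (↑u⁻¹ : Module.End (ZMod 2) Vsp)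
  set b' := (↑v⁻¹ : Module.End (ZMod 2) Vsp)
  have haa : a * a' = 1 := u.mul_inv
  have hbb : b * b' = 1 := v.mul_inv
  have h0 : b * a * a' * b' = 1 := by rw [mul_assoc b a a', haa, mul_one, hbb]
  have key : (↑(u * v * u⁻¹ * v⁻¹) : Module.End (ZMod 2) Vsp) - 1 =
      (a * b - b * a) * a' * b' := by
    have h1 : (a * b - b * a) * a' * b' = a * b * a' * b' - b * a * a' * b' := by
      rw [sub_mul, sub_mul]
    rw [h1, h0]
    rfl
  have hab : a * b - b * a = (a - 1) * (b - 1) - (b - 1) * (a - 1) := by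
    simp only [sub_mul, mul_sub, one_mul, mul_one]; abel
  have hz : a * b - b * a ∈ Sset (d + e) := by
    rw [hab]
    exact Sset_sub (Sset_mul hu hv) (Sset_anti (by omega) (Sset_mul hv hu))
  rw [key]
  exact Sset_mul_one_add (Sset_mul_one_add hz hui) hvi

lemma lcs_le_Kgrp (q : ℕ) :
    (⊤ : Subgroup (FreeGroup (Fin 4))).lowerCentralSeries q ≤ Kgrp (q + 1) := by
  induction q with
  | zero => intro g _; exact mem_Kgrp_one g
  | succ q ih =>
    rw [lowerCentralSeries_succ]
    apply (Subgroup.closure_le _).mpr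
    rintro x ⟨p, hp, b, -, rfl⟩
    have hpK := ih hp
    have hbK := mem_Kgrp_one b
    refine ⟨?_, ?_⟩
    · rw [commutatorElement_def, map_mul, map_mul, map_mul, map_inv, map_inv]
      exact Sset_anti (by omega) (comm_mem hpK.1 hpK.2 hbK.1 hbK.2)
    · have hinv : (chiG p * chiG b * (chiG p)⁻¹ * (chiG b)⁻¹)⁻¹ =
          chiG b * chiG p * (chiG b)⁻¹ * (chiG p)⁻¹ := by group
      rw [commutatorElement_def, map_mul, map_mul, map_mul, map_inv, map_inv, hinv]
      exact Sset_anti (by omega) (comm_mem hbK.1 hbK.2 hpK.1 hpK.2)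

lemma chi_pow4 (g : FreeGroup (Fin 4)) : chiG g ^ 4 = 1 := by
  have hg := (mem_Kgrp_one g).1
  set a := (↑(chiG g) : Module.End (ZMod 2) Vsp) with ha
  set n := a - 1 with hn
  have han : a = 1 + n := by rw [hn]; noncomm_ring
  have hn4 : n ^ 4 = 0 := by
    apply Sset_four
    have e : n ^ 4 = n ^ 2 * n ^ 2 := by rw [← pow_add]
    have h2 : n ^ 2 ∈ Sset 2 := by rw [pow_two]; exact Sset_mul hg hg
    rw [e]
    exact Sset_mul h2 h2
  have hsq : ∀ x : Module.End (ZMod 2) Vsp, (1 + x) ^ 2 = 1 + (x + x) + x ^ 2 := by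
    intro x; noncomm_ring
  have ha2 : a ^ 2 = 1 + n ^ 2 := by
    rw [han, hsq, end_addself, add_zero]
  have ha4 : a ^ 4 = 1 := by
    have e : a ^ 4 = (a ^ 2) ^ 2 := by rw [← pow_mul]
    have e2 : (n ^ 2) ^ 2 = n ^ 4 := by rw [← pow_mul]
    rw [e, ha2, hsq, end_addself, add_zero, e2, hn4, add_zero]
  apply Units.ext
  rw [Units.val_pow_eq_pow_val]
  exact ha4.trans rfl

lemma WbarGamma_le_ker : WbarGamma 4 4 5 ≤ chiG.ker := by
  apply sup_le
  · apply Subgroup.normalClosure_le_normal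
    rintro x ⟨w, rfl⟩
    rw [SetLike.mem_coe, MonoidHom.mem_ker, map_pow]
    exact chi_pow4 w
  · intro g hg
    rw [MonoidHom.mem_ker]
    have hK : g ∈ Kgrp 5 := lcs_le_Kgrp 4 hg
    have h4 : (↑(chiG g) : Module.End (ZMod 2) Vsp) - 1 ∈ Sset 4 :=
      Sset_anti (by omega) hK.1
    have h0 : (↑(chiG g) : Module.End (ZMod 2) Vsp) - 1 = 0 := Sset_four h4
    apply Units.ext
    rw [Units.val_one, ← sub_eq_zero]
    exact h0

lemma chi_r_val : (↑(chiG rWelded) : Module.End (ZMod 2) Vsp) =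
    (1 + Pop 3) * Qinv 0 * (1 + Pop 1) * Qinv 3 * (1 + Pop 0) * Qinv 1 * (1 + Pop 2) *
      Qinv 1 * (1 + Pop 0) * Qinv 3 * (1 + Pop 1) * Qinv 0 * (1 + Pop 3) * Qinv 2 := by
  simp only [rWelded, QWelded, xF4, map_mul, map_inv, chi_of, Units.val_mul,
    Uop_val, Uop_inv_val]

lemma chi_r_comp :
    (↑(chiG rWelded) : Module.End (ZMod 2) Vsp) deltaNil [3, 1, 2] = 1 := by
  rw [chi_r_val]
  decide

lemma symm_single (l : List (Fin 4)) (b : ZMod 2) :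
    (FreeAlgebra.equivMonoidAlgebraFreeMonoid (R := ZMod 2) (X := Fin 4)).symm
      (MonoidAlgebra.single (FreeMonoid.ofList l) b) = b • magnusMonomial 2 4 l := by
  rw [FreeAlgebra.equivMonoidAlgebraFreeMonoid, AlgEquiv.ofAlgHom_symm_apply,
    MonoidAlgebra.lift_single, FreeMonoid.lift_apply]
  rfl

set_option synthInstance.maxHeartbeats 400000 in
lemma coeff_eq (t : FreeAlgebra (ZMod 2) (Fin 4)) :
    magnusCoeff 2 4 [3, 1, 2] t = psiA t deltaNil [3, 1, 2] := by
  set E := FreeAlgebra.equivMonoidAlgebraFreeMonoid (R := ZMod 2) (X := Fin 4) with hE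
  have key : ∀ f : MonoidAlgebra (ZMod 2) (FreeMonoid (Fin 4)),
      f.coeff (FreeMonoid.ofList [3, 1, 2]) = psiA (E.symm f) deltaNil [3, 1, 2] := by
    intro f
    induction f using MonoidAlgebra.induction with
    | zero => simp [map_zero]
    | single_add a b f _ _ ih =>
      rw [MonoidAlgebra.coeff_add, map_add, map_add, Finsupp.add_apply, LinearMap.add_apply, Pi.add_apply, ← ih]
      congr 1
      rw [MonoidAlgebra.coeff_single]
      have hss : E.symm (MonoidAlgebra.single a b) =
          b • magnusMonomial 2 4 (FreeMonoid.toList a) := symm_single (FreeMonoid.toList a) b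
      have hsmul : (b • psiA (magnusMonomial 2 4 (FreeMonoid.toList a))) deltaNil [3, 1, 2] =
          b * (psiA (magnusMonomial 2 4 (FreeMonoid.toList a)) deltaNil [3, 1, 2]) := rfl
      rw [hss, map_smul, hsmul, psiA_monomial]
      have hpd := prodP_delta (FreeMonoid.toList a) [3, 1, 2]
      rw [show (prodP (FreeMonoid.toList a)) deltaNil [3, 1, 2] = _ from hpd]
      by_cases h : FreeMonoid.toList a = [3, 1, 2]
      · have ha2 : a = FreeMonoid.ofList [3, 1, 2] := by
          have ha' : a = FreeMonoid.ofList (FreeMonoid.toList a) := rfl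
          rw [ha', h]
        rw [if_pos ⟨h.symm, by simp [h]⟩, mul_one, ha2, Finsupp.single_eq_same]
      · rw [if_neg (by rintro ⟨h1, -⟩; exact h h1.symm), mul_zero]
        exact Finsupp.single_eq_of_ne' (fun hc => h (congrArg FreeMonoid.toList hc))
  have : t = E.symm (E t) := (AlgEquiv.symm_apply_apply E t).symm
  rw [magnusCoeff, this]
  rw [AlgEquiv.apply_symm_apply]
  exact key (E t)

/-- The element `r_b ∈ F_4` does not belong to `W̄_4 · γ_5 F_4`;
indeed, in `A_4` over `ℤ/2ℤ` on `X_1, …, X_4`, the degree-3 component of `E^2(r_b)` has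
coefficient `1` on `X_4X_2X_3`. -/
theorem rWelded_not_mem_WbarGamma_four :
    rWelded ∉ WbarGamma 4 4 5 ∧
    ∀ t : FreeAlgebra (ZMod 2) (Fin 4),
      truncMk 2 4 4 t = ↑(magnus 2 4 4 rWelded) →
        magnusCoeff 2 4 [3, 1, 2] t = 1 := by
  constructor
  · intro hmem
    have h1 : chiG rWelded = 1 := WbarGamma_le_ker hmem
    have h2 := chi_r_comp
    rw [h1, Units.val_one] at h2
    have h3 : (1 : Module.End (ZMod 2) Vsp) deltaNil [3, 1, 2] = 0 := rfl
    rw [h3] at h2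
    exact absurd h2 (by decide)
  · intro t ht
    rw [coeff_eq, show psiA t = psiBar (truncMk 2 4 4 t) from (psiBar_mk t).symm, ht]
    have : psiBar ↑(magnus 2 4 4 rWelded) = (↑(chiG rWelded) : Module.End (ZMod 2) Vsp) := rfl
    rw [this]
    exact chi_r_comp
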